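/- For every x ∈ S and z > 0: U(x,x|z) > 1 if and only if z > 1/ρ. -/

import Mathlib

open scoped Classical ENNReal NNReal

variable {S : Type*}

/-- The `n`-step transition probabilities `P^n(x,y)` (n-th matrix power of `P`). -/
noncomputable def kpow (P : S → S → ℝ) : ℕ → S → S → ℝ
  | 0, x, y => if x = y then 1 else 0
  | n+1, x, y => ∑' w, P x w * kpow P n w y

/-- `P` is a transition probability: nonnegative entries and each row sums to `1`. -/
def IsTransProb (P : S → S → ℝ) : Prop :=
  (∀ x y, 0 ≤ P x y) ∧ ∀ x, HasSum (P x) 1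

/-- `P` is irreducible: for all `x, y` there is `n ≥ 0` with `P^n(x,y) > 0`. -/
def Irred (P : S → S → ℝ) : Prop :=
  ∀ x y, ∃ n, 0 < kpow P n x y

/-- The Green function `G(x,y|z) = ∑_{n ≥ 0} P^n(x,y) zⁿ`, a sum in `[0,∞]`. -/
noncomputable def green (P : S → S → ℝ) (x y : S) (z : ℝ) : ℝ≥0∞ :=
  ∑' n, ENNReal.ofReal (kpow P n x y * z ^ n)

/-- Radius of convergence of the power series with coefficients `a`,
as the supremum (in `[0,∞]`) of the nonnegative `z` at which the series converges. -/
noncomputable def convRadius (a : ℕ → ℝ) : ℝ≥0∞ :=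
  ⨆ (z : ℝ≥0) (_ : Summable fun n => a n * (z : ℝ) ^ n), (z : ℝ≥0∞)

/-- The spectral radius as an extended nonnegative real: the reciprocal of the
radius of convergence of `G(x,x|·)` (independent of `x` when `P` is irreducible). -/
noncomputable def specRadiusE (P : S → S → ℝ) : ℝ≥0∞ :=
  ⨆ x, (convRadius fun n => kpow P n x x)⁻¹

/-- The spectral radius `ρ` of `P`. -/
noncomputable def specRadius (P : S → S → ℝ) : ℝ :=
  (specRadiusE P).toReal

/-- The `(L,κ)`-lazy version `P^L_κ` of `P`:
`P^L_κ(x,y) = κ·1_{x=y} + (1-κ)P(x,y)` for `x ∈ L`, and `P^L_κ(x,y) = P(x,y)` for `x ∉ L`. -/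
noncomputable def lazy (P : S → S → ℝ) (L : Set S) (κ : ℝ) : S → S → ℝ :=
  fun x y => if x ∈ L then (if x = y then κ else 0) + (1 - κ) * P x y else P x y

/-- First-return probabilities: `u_0(x,y) = 0`, `u_1(x,y) = P(x,y)`, and
`u_n(x,y) = ∑_{w ≠ y} P(x,w) u_{n-1}(w,y)` for `n ≥ 2`. -/
noncomputable def fret (P : S → S → ℝ) : ℕ → S → S → ℝ
  | 0, _, _ => 0
  | 1, x, y => P x y
  | n+2, x, y => ∑' w, if w = y then 0 else P x w * fret P (n+1) w y

/-- The U-function `U(x,y|z) = ∑_{n ≥ 0} u_n(x,y) zⁿ`, a sum in `[0,∞]`. -/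
noncomputable def Ufun (P : S → S → ℝ) (x y : S) (z : ℝ) : ℝ≥0∞ :=
  ∑' n, ENNReal.ofReal (fret P n x y * z ^ n)

/-- `r(U|x,y)`, the radius of convergence of `U(x,y|·)`. -/
noncomputable def rU (P : S → S → ℝ) (x y : S) : ℝ≥0∞ :=
  convRadius fun n => fret P n x y

/-- `P` is rho-recurrent if `G(x,x|1/ρ) = ∞` (for all, equivalently some, `x`). -/
def RhoRecurrent (P : S → S → ℝ) : Prop :=
  ∀ x, green P x x (specRadius P)⁻¹ = ∞

/-- `P` is rho-transient if `G(x,x|1/ρ) < ∞` (for all, equivalently some, `x`). -/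
def RhoTransient (P : S → S → ℝ) : Prop :=
  ∀ x, green P x x (specRadius P)⁻¹ ≠ ∞

/-- A rho-recurrent `P` is strictly rho-recurrent if `r(U|x,x) > 1/ρ` for some `x`. -/
def StrictlyRhoRecurrent (P : S → S → ℝ) : Prop :=
  RhoRecurrent P ∧ ∃ x, ENNReal.ofReal (specRadius P)⁻¹ < rU P x x

/-- A rho-recurrent `P` is critically rho-recurrent if `r(U|x,x) = 1/ρ` for all `x`. -/
def CriticallyRhoRecurrent (P : S → S → ℝ) : Prop :=
  RhoRecurrent P ∧ ∀ x, rU P x x = ENNReal.ofReal (specRadius P)⁻¹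

section basics
variable {P : S → S → ℝ}

lemma P_le_one (hP : IsTransProb P) (x y : S) : P x y ≤ 1 :=
  le_hasSum (hP.2 x) y (fun w _ => hP.1 x w)

lemma kpow_nonneg (hP : IsTransProb P) : ∀ n x y, 0 ≤ kpow P n x y := by
  intro n
  induction n with
  | zero => intro x y; simp only [kpow]; split <;> norm_num
  | succ n ih =>
    intro x y
    simp only [kpow]
    exact tsum_nonneg fun w => mul_nonneg (hP.1 x w) (ih w y)

lemma kpow_le_one (hP : IsTransProb P) : ∀ n x y, kpow P n x y ≤ 1 := by
  intro n
  induction n with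
  | zero => intro x y; simp only [kpow]; split <;> norm_num
  | succ n ih =>
    intro x y
    simp only [kpow]
    by_cases hs : Summable (fun w => P x w * kpow P n w y)
    · calc ∑' w, P x w * kpow P n w y ≤ ∑' w, P x w := by
            refine Summable.tsum_le_tsum (fun w => ?_) hs (hP.2 x).summable
            calc P x w * kpow P n w y ≤ P x w * 1 :=
                  mul_le_mul_of_nonneg_left (ih w y) (hP.1 x w)
              _ = P x w := mul_one _
        _ = 1 := (hP.2 x).tsum_eq
    · rw [tsum_eq_zero_of_not_summable hs]; norm_num

lemma summable_kpow_term (hP : IsTransProb P) (n : ℕ) (x y : S) :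
    Summable (fun w => P x w * kpow P n w y) := by
  refine Summable.of_nonneg_of_le (fun w => mul_nonneg (hP.1 x w) (kpow_nonneg hP n w y))
    (fun w => ?_) (hP.2 x).summable
  calc P x w * kpow P n w y ≤ P x w * 1 :=
        mul_le_mul_of_nonneg_left (kpow_le_one hP n w y) (hP.1 x w)
    _ = P x w := mul_one _

lemma fret_nonneg_le_one (hP : IsTransProb P) : ∀ n x y, 0 ≤ fret P n x y ∧ fret P n x y ≤ 1 := by
  intro n
  induction n with
  | zero => intro x y; simp [fret]
  | succ n ih =>
    match n, ih with
    | 0, _ => intro x y; exact ⟨hP.1 x y, P_le_one hP x y⟩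
    | n+1, ih =>
      intro x y
      simp only [fret]
      constructor
      · refine tsum_nonneg fun w => ?_
        split
        · exact le_rfl
        · exact mul_nonneg (hP.1 x w) (ih w y).1
      · by_cases hs : Summable (fun w => if w = y then 0 else P x w * fret P (n+1) w y)
        · calc ∑' w, (if w = y then 0 else P x w * fret P (n+1) w y) ≤ ∑' w, P x w := by
                refine Summable.tsum_le_tsum (fun w => ?_) hs (hP.2 x).summable
                split
                · exact hP.1 x w
                · calc P x w * fret P (n+1) w y ≤ P x w * 1 :=
                        mul_le_mul_of_nonneg_left (ih w y).2 (hP.1 x w)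
                    _ = P x w := mul_one _
            _ = 1 := (hP.2 x).tsum_eq
        · rw [tsum_eq_zero_of_not_summable hs]; norm_num

lemma fret_nonneg (hP : IsTransProb P) (n : ℕ) (x y : S) : 0 ≤ fret P n x y := (fret_nonneg_le_one hP n x y).1
lemma fret_le_one (hP : IsTransProb P) (n : ℕ) (x y : S) : fret P n x y ≤ 1 := (fret_nonneg_le_one hP n x y).2

lemma summable_fret_term (hP : IsTransProb P) (n : ℕ) (x y : S) :
    Summable (fun w => if w = y then 0 else P x w * fret P (n+1) w y) := by
  refine Summable.of_nonneg_of_le (fun w => ?_) (fun w => ?_) (hP.2 x).summable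
  · split
    · exact le_rfl
    · exact mul_nonneg (hP.1 x w) (fret_nonneg hP _ w y)
  · split
    · exact hP.1 x w
    · calc P x w * fret P (n+1) w y ≤ P x w * 1 :=
          mul_le_mul_of_nonneg_left (fret_le_one hP _ w y) (hP.1 x w)
      _ = P x w := mul_one _

end basics

noncomputable def qpow (P : S → S → ℝ) : ℕ → S → S → ℝ≥0∞
  | 0, x, y => if x = y then 1 else 0
  | n+1, x, y => ∑' w, ENNReal.ofReal (P x w) * qpow P n w y

noncomputable def fE (P : S → S → ℝ) : ℕ → S → S → ℝ≥0∞
  | 0, _, _ => 0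
  | 1, x, y => ENNReal.ofReal (P x y)
  | n+2, x, y => ∑' w, if w = y then 0 else ENNReal.ofReal (P x w) * fE P (n+1) w y

section transfer
variable {P : S → S → ℝ}

lemma qpow_eq (hP : IsTransProb P) : ∀ n x y, qpow P n x y = ENNReal.ofReal (kpow P n x y) := by
  intro n
  induction n with
  | zero =>
    intro x y; simp only [qpow, kpow]
    split <;> simp
  | succ n ih =>
    intro x y
    simp only [qpow, kpow]
    rw [ENNReal.ofReal_tsum_of_nonneg
      (fun w => mul_nonneg (hP.1 x w) (kpow_nonneg hP n w y)) (summable_kpow_term hP n x y)]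
    exact tsum_congr fun w => by
      rw [ih w y, ← ENNReal.ofReal_mul (hP.1 x w)]

lemma fE_eq (hP : IsTransProb P) : ∀ n x y, fE P n x y = ENNReal.ofReal (fret P n x y) := by
  intro n
  induction n with
  | zero => intro x y; simp [fE, fret]
  | succ n ih =>
    match n, ih with
    | 0, _ => intro x y; simp [fE, fret]
    | n+1, ih =>
      intro x y
      simp only [fE, fret]
      rw [ENNReal.ofReal_tsum_of_nonneg (fun w => ?_) (summable_fret_term hP n x y)]
      · refine tsum_congr fun w => ?_
        split
        · simp
        · rw [ih w y, ← ENNReal.ofReal_mul (hP.1 x w)]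
      · split
        · exact le_rfl
        · exact mul_nonneg (hP.1 x w) (fret_nonneg hP _ w y)

lemma qpow_ne_top (hP : IsTransProb P) (n : ℕ) (x y : S) : qpow P n x y ≠ ∞ := by
  rw [qpow_eq hP]; exact ENNReal.ofReal_ne_top

lemma qpow_le_one (hP : IsTransProb P) (n : ℕ) (x y : S) : qpow P n x y ≤ 1 := by
  rw [qpow_eq hP]
  exact ENNReal.ofReal_le_one.mpr (kpow_le_one hP n x y)

lemma qpow_zero_self (x : S) : qpow P 0 x x = 1 := by simp [qpow]

lemma chapman (P : S → S → ℝ) : ∀ m n (x y : S),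
    qpow P (m + n) x y = ∑' w, qpow P m x w * qpow P n w y := by
  intro m
  induction m with
  | zero =>
    intro n x y
    rw [Nat.zero_add]
    rw [tsum_eq_single x (fun w hw => by simp [qpow, (Ne.symm hw : ¬ x = w)])]
    simp [qpow]
  | succ m ih =>
    intro n x y
    have : m + 1 + n = (m + n) + 1 := by omega
    rw [this]
    simp only [qpow]
    calc ∑' v, ENNReal.ofReal (P x v) * qpow P (m + n) v y
        = ∑' v, ENNReal.ofReal (P x v) * ∑' w, qpow P m v w * qpow P n w y := by
          exact tsum_congr fun v => by rw [ih n v y]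
      _ = ∑' v, ∑' w, ENNReal.ofReal (P x v) * (qpow P m v w * qpow P n w y) := by
          exact tsum_congr fun v => ENNReal.tsum_mul_left.symm
      _ = ∑' w, ∑' v, ENNReal.ofReal (P x v) * (qpow P m v w * qpow P n w y) :=
          ENNReal.tsum_comm
      _ = ∑' w, (∑' v, ENNReal.ofReal (P x v) * qpow P m v w) * qpow P n w y := by
          refine tsum_congr fun w => ?_
          rw [← ENNReal.tsum_mul_right]
          exact tsum_congr fun v => by ring
      _ = ∑' w, qpow P (m+1) x w * qpow P n w y := by
          exact tsum_congr fun w => by rw [(by simp [qpow] : qpow P (m+1) x w = ∑' v, ENNReal.ofReal (P x v) * qpow P m v w)]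

lemma qpow_supermul (P : S → S → ℝ) (m n : ℕ) (x y w : S) :
    qpow P m x y * qpow P n y w ≤ qpow P (m + n) x w := by
  rw [chapman P m n x w]
  exact ENNReal.le_tsum y

lemma kpow_supermul (hP : IsTransProb P) (m n : ℕ) (x y w : S) :
    kpow P m x y * kpow P n y w ≤ kpow P (m + n) x w := by
  have := qpow_supermul P m n x y w
  rw [qpow_eq hP, qpow_eq hP, qpow_eq hP, ← ENNReal.ofReal_mul (kpow_nonneg hP m x y)] at this
  exact (ENNReal.ofReal_le_ofReal_iff (kpow_nonneg hP _ x w)).mp this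

end transfer

section renewal
variable {P : S → S → ℝ}

lemma fE_succ_succ (n : ℕ) (x y : S) :
    fE P (n+2) x y = ∑' w, if w = y then 0 else ENNReal.ofReal (P x w) * fE P (n+1) w y := by
  simp [fE]

lemma renewal (y : S) : ∀ n (x : S),
    qpow P (n+1) x y = ∑ m ∈ Finset.range (n+1), fE P (m+1) x y * qpow P (n-m) y y := by
  intro n
  induction n with
  | zero =>
    intro x
    show (∑' w, ENNReal.ofReal (P x w) * qpow P 0 w y) = _
    rw [tsum_eq_single y (fun w hw => by simp [qpow, hw])]
    simp [qpow, fE]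
  | succ n ih =>
    intro x
    have step : qpow P (n+2) x y
        = ENNReal.ofReal (P x y) * qpow P (n+1) y y
          + ∑' w, (if w = y then 0 else ENNReal.ofReal (P x w) * qpow P (n+1) w y) := by
      show (∑' w, ENNReal.ofReal (P x w) * qpow P (n+1) w y) = _
      rw [ENNReal.tsum_eq_add_tsum_ite y]
    rw [step]
    have expand : ∀ w, (if w = y then 0 else ENNReal.ofReal (P x w) * qpow P (n+1) w y)
        = ∑ m ∈ Finset.range (n+1), (if w = y then 0 else ENNReal.ofReal (P x w) * fE P (m+1) w y)
            * qpow P (n-m) y y := by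
      intro w
      split
      · simp
      · rw [ih w, Finset.mul_sum]
        exact Finset.sum_congr rfl fun m _ => by ring
    calc ENNReal.ofReal (P x y) * qpow P (n+1) y y
          + ∑' w, (if w = y then 0 else ENNReal.ofReal (P x w) * qpow P (n+1) w y)
        = ENNReal.ofReal (P x y) * qpow P (n+1) y y
          + ∑ m ∈ Finset.range (n+1),
              (∑' w, (if w = y then 0 else ENNReal.ofReal (P x w) * fE P (m+1) w y))
              * qpow P (n-m) y y := by
          congr 1
          rw [tsum_congr expand,
            Summable.tsum_finsetSum (fun m _ => ENNReal.summable)]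
          exact Finset.sum_congr rfl fun m _ => ENNReal.tsum_mul_right
      _ = ∑ m ∈ Finset.range (n+2), fE P (m+1) x y * qpow P (n+1-m) y y := by
          rw [Finset.sum_range_succ' (fun m => fE P (m+1) x y * qpow P (n+1-m) y y) (n+1)]
          simp only [Nat.sub_zero, Nat.succ_sub_succ]
          rw [add_comm]
          congr 1

lemma ennreal_cauchy (A B : ℕ → ℝ≥0∞) :
    ∑' n, ∑ m ∈ Finset.range (n+1), A m * B (n-m) = (∑' n, A n) * (∑' n, B n) := by
  have h1 : ∀ m : ℕ, (∑' n : ℕ, if m ≤ n then A m * B (n - m) else 0) = A m * ∑' k, B k := by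
    intro m
    rw [← ENNReal.tsum_mul_left]
    refine (Function.Injective.tsum_eq (f := fun n => if m ≤ n then A m * B (n - m) else 0)
      (g := fun k => m + k) (fun a b hab => by simpa using hab) ?_).symm.trans ?_
    · intro n hn
      rcases le_or_gt m n with h | h
      · exact ⟨n - m, by simp; omega⟩
      · exfalso; apply hn; simp [Function.mem_support, if_neg (not_le.mpr h)]
    · exact tsum_congr fun k => by simp
  calc ∑' n, ∑ m ∈ Finset.range (n+1), A m * B (n-m)
      = ∑' n, ∑' m : ℕ, (if m ≤ n then A m * B (n - m) else 0) := by
        refine tsum_congr fun n => ?_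
        rw [tsum_eq_sum (s := Finset.range (n+1)) (fun m hm => by
          rw [Finset.mem_range] at hm; exact if_neg (by omega))]
        exact Finset.sum_congr rfl fun m hm => by
          rw [if_pos (Nat.lt_succ_iff.mp (Finset.mem_range.mp hm))]
    _ = ∑' m, ∑' n : ℕ, (if m ≤ n then A m * B (n - m) else 0) := ENNReal.tsum_comm
    _ = ∑' m, A m * ∑' k, B k := tsum_congr h1
    _ = (∑' n, A n) * (∑' n, B n) := ENNReal.tsum_mul_right

noncomputable def GrE (P : S → S → ℝ) (x : S) (t : ℝ≥0∞) : ℝ≥0∞ := ∑' n, qpow P n x x * t^n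
noncomputable def UE (P : S → S → ℝ) (x : S) (t : ℝ≥0∞) : ℝ≥0∞ := ∑' n, fE P n x x * t^n

lemma fE_zero (P : S → S → ℝ) (x y : S) : fE P 0 x y = 0 := by simp [fE]

lemma UE_eq_shift (P : S → S → ℝ) (x : S) (t : ℝ≥0∞) :
    UE P x t = ∑' n, fE P (n+1) x x * t^(n+1) := by
  rw [UE, tsum_eq_zero_add' ENNReal.summable, fE_zero]
  simp

lemma GrE_renewal (P : S → S → ℝ) (x : S) (t : ℝ≥0∞) :
    GrE P x t = 1 + UE P x t * GrE P x t := by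
  have h0 : GrE P x t = 1 + ∑' n, qpow P (n+1) x x * t^(n+1) := by
    rw [GrE, tsum_eq_zero_add' ENNReal.summable, qpow_zero_self]
    simp
  nth_rewrite 1 [h0]
  congr 1
  rw [UE_eq_shift]
  calc ∑' n, qpow P (n+1) x x * t^(n+1)
      = ∑' n, ∑ m ∈ Finset.range (n+1),
          (fE P (m+1) x x * t^(m+1)) * (qpow P (n-m) x x * t^(n-m)) := by
        refine tsum_congr fun n => ?_
        rw [renewal x n x, Finset.sum_mul]
        refine Finset.sum_congr rfl fun m hm => ?_
        have hmn : m ≤ n := Nat.lt_succ_iff.mp (Finset.mem_range.mp hm)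
        have : t^(n+1) = t^(m+1) * t^(n-m) := by
          rw [← pow_add]; congr 1; omega
        rw [this]; ring
    _ = (∑' m, fE P (m+1) x x * t^(m+1)) * (∑' k, qpow P k x x * t^k) :=
        ennreal_cauchy (fun m => fE P (m+1) x x * t^(m+1)) (fun k => qpow P k x x * t^k)
    _ = (∑' n, fE P (n+1) x x * t^(n+1)) * GrE P x t := rfl

lemma one_le_GrE (P : S → S → ℝ) (x : S) (t : ℝ≥0∞) : 1 ≤ GrE P x t := by
  have := ENNReal.le_tsum (f := fun n => qpow P n x x * t^n) 0
  simpa [GrE, qpow_zero_self] using this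

lemma UE_lt_one_of_GrE_ne_top {P : S → S → ℝ} {x : S} {t : ℝ≥0∞}
    (h : GrE P x t ≠ ∞) : UE P x t < 1 := by
  by_contra hc
  push_neg at hc
  have h1 := GrE_renewal P x t
  have h2 : 1 + GrE P x t ≤ GrE P x t := by
    calc 1 + GrE P x t = 1 + 1 * GrE P x t := by rw [one_mul]
      _ ≤ 1 + UE P x t * GrE P x t := by
          gcongr
      _ = GrE P x t := h1.symm
  have h3 : GrE P x t < 1 + GrE P x t := by
    rw [add_comm]; exact ENNReal.lt_add_right h one_ne_zero
  exact absurd (h2.trans_lt h3) (lt_irrefl _)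

lemma GrE_lt_top_of_UE_lt_one (hP : IsTransProb P) {x : S} {t : ℝ≥0∞}
    (ht : t ≠ ∞) (h : UE P x t < 1) : GrE P x t < ∞ := by
  set u := UE P x t with hu
  set B : ℕ → ℝ≥0∞ := fun k => qpow P k x x * t^k with hB
  have hBfin : ∀ k, B k ≠ ∞ := fun k =>
    ENNReal.mul_ne_top (ne_top_of_le_ne_top ENNReal.one_ne_top (qpow_le_one hP k x x))
      (ENNReal.pow_ne_top ht)
  have hgfin : ∀ N, (∑ n ∈ Finset.range N, B n) ≠ ∞ := by
    intro N
    exact (ENNReal.sum_lt_top.mpr (fun n _ => (hBfin n).lt_top)).ne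
  set A : ℕ → ℝ≥0∞ := fun m => fE P (m+1) x x * t^(m+1) with hA
  have hAu : ∀ N, (∑ m ∈ Finset.range N, A m) ≤ u := by
    intro N
    rw [hu, UE_eq_shift]
    exact ENNReal.sum_le_tsum _
  have key : ∀ N, (∑ n ∈ Finset.range N, B n) ≤ 1 + u * (∑ n ∈ Finset.range N, B n) := by
    intro N
    cases N with
    | zero => simp
    | succ N =>
      rw [Finset.sum_range_succ' B N]
      have hB0 : B 0 = 1 := by simp [hB, qpow_zero_self]
      rw [hB0, add_comm]
      gcongr 1 + ?_
      calc ∑ n ∈ Finset.range N, B (n+1)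
          = ∑ n ∈ Finset.range N, ∑ m ∈ Finset.range (n+1), A m * B (n-m) := by
            refine Finset.sum_congr rfl fun n _ => ?_
            show qpow P (n+1) x x * t^(n+1) = _
            rw [renewal x n x, Finset.sum_mul]
            refine Finset.sum_congr rfl fun m hm => ?_
            have hmn : m ≤ n := Nat.lt_succ_iff.mp (Finset.mem_range.mp hm)
            have : t^(n+1) = t^(m+1) * t^(n-m) := by
              rw [← pow_add]; congr 1; omega
            rw [this, hA, hB]; ring
        _ = ∑ m ∈ Finset.range N, ∑ n ∈ Finset.range N,
              (if m ≤ n then A m * B (n-m) else 0) := by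
            rw [← Finset.sum_comm]
            refine Finset.sum_congr rfl fun n hn => ?_
            rw [Finset.mem_range] at hn
            calc ∑ m ∈ Finset.range (n+1), A m * B (n-m)
                = ∑ m ∈ Finset.range (n+1), (if m ≤ n then A m * B (n-m) else 0) :=
                  Finset.sum_congr rfl fun m hm =>
                    (if_pos (Nat.lt_succ_iff.mp (Finset.mem_range.mp hm))).symm
              _ = ∑ m ∈ Finset.range N, (if m ≤ n then A m * B (n-m) else 0) :=
                  Finset.sum_subset (Finset.range_subset_range.mpr (show n+1 ≤ N by omega))
                    (fun m _ hm => if_neg (by rw [Finset.mem_range] at hm; omega))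
        _ ≤ ∑ m ∈ Finset.range N, A m * (∑ k ∈ Finset.range (N+1), B k) := by
            refine Finset.sum_le_sum fun m _ => ?_
            calc (∑ n ∈ Finset.range N, if m ≤ n then A m * B (n-m) else 0)
                = ∑ n ∈ Finset.Ico m N, A m * B (n - m) := by
                  rw [← Finset.sum_filter]
                  congr 1
                  ext a
                  simp only [Finset.mem_filter, Finset.mem_range, Finset.mem_Ico]
                  omega
              _ = ∑ k ∈ Finset.range (N - m), A m * B k := by
                  rw [Finset.sum_Ico_eq_sum_range]
                  exact Finset.sum_congr rfl fun k _ => by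
                    rw [Nat.add_sub_cancel_left]
              _ ≤ A m * (∑ k ∈ Finset.range (N+1), B k) := by
                  rw [← Finset.mul_sum]
                  exact mul_le_mul_right (Finset.sum_le_sum_of_subset
                    (Finset.range_subset_range.mpr (show N - m ≤ N + 1 by omega))) (A m)
        _ ≤ u * (∑ k ∈ Finset.range (N+1), B k) := by
            rw [← Finset.sum_mul]
            gcongr
            exact hAu N
        _ = u * (1 + ∑ n ∈ Finset.range N, B (n+1)) := by
            rw [Finset.sum_range_succ' B N, hB0, add_comm]
  have bound : ∀ N, (∑ n ∈ Finset.range N, B n) ≤ (1 - u)⁻¹ := by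
    intro N
    have hg := key N
    set g := ∑ n ∈ Finset.range N, B n
    have hug : u * g ≠ ∞ := ENNReal.mul_ne_top (h.trans ENNReal.one_lt_top).ne (hgfin N)
    have hsub : g - u * g ≤ 1 := by
      rw [tsub_le_iff_right]
      exact key N
    have hmul : (1 - u) * g ≤ 1 := by
      rw [ENNReal.sub_mul (fun _ _ => hgfin N), one_mul]
      exact hsub
    exact ENNReal.le_inv_iff_mul_le.mpr (by rwa [mul_comm])
  have hG : GrE P x t ≤ (1 - u)⁻¹ := by
    rw [GrE, ENNReal.tsum_eq_iSup_nat]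
    exact iSup_le bound
  exact hG.trans_lt (ENNReal.inv_lt_top.mpr (tsub_pos_of_lt h))

end renewal

section radius
variable {P : S → S → ℝ}

/-- radius of convergence of the Green function at x -/
noncomputable def rad (P : S → S → ℝ) (x : S) : ℝ≥0∞ := convRadius (fun n => kpow P n x x)

lemma le_rad {x : S} {z : ℝ≥0} (h : Summable fun n => kpow P n x x * (z:ℝ)^n) :
    (z : ℝ≥0∞) ≤ rad P x := by
  rw [rad, convRadius]
  exact le_iSup₂ (f := fun (z : ℝ≥0) (_ : Summable fun n => kpow P n x x * (z:ℝ)^n) => (z:ℝ≥0∞)) z h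

lemma rad_le {x : S} {C : ℝ≥0∞}
    (h : ∀ z : ℝ≥0, (Summable fun n => kpow P n x x * (z:ℝ)^n) → (z : ℝ≥0∞) ≤ C) :
    rad P x ≤ C := by
  rw [rad, convRadius]
  exact iSup₂_le h

lemma one_le_rad (hP : IsTransProb P) (x : S) : 1 ≤ rad P x := by
  refine le_of_forall_lt fun c hc => ?_
  have hc1 : c ≠ ∞ := (hc.trans ENNReal.one_lt_top).ne
  set z : ℝ≥0 := (c.toNNReal + 1) / 2 with hz
  have hcz : c.toNNReal < 1 := by
    rw [← ENNReal.coe_lt_one_iff]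
    rwa [ENNReal.coe_toNNReal hc1]
  have hz1 : z < 1 := by
    rw [hz]
    rw [div_lt_one (by norm_num : (0:ℝ≥0) < 2)]
    calc c.toNNReal + 1 < 1 + 1 := by exact add_lt_add_left hcz 1
      _ = 2 := by norm_num
  have hcz2 : c.toNNReal < z := by
    rw [hz, lt_div_iff₀ (by norm_num : (0:ℝ≥0) < 2)]
    calc c.toNNReal * 2 = c.toNNReal + c.toNNReal := by ring
      _ < c.toNNReal + 1 := by exact add_lt_add_right hcz _
  have hsum : Summable fun n => kpow P n x x * (z:ℝ)^n := by
    refine Summable.of_nonneg_of_le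
      (fun n => mul_nonneg (kpow_nonneg hP n x x) (pow_nonneg z.coe_nonneg n))
      (fun n => ?_) (summable_geometric_of_lt_one z.coe_nonneg ?_)
    · calc kpow P n x x * (z:ℝ)^n ≤ 1 * (z:ℝ)^n :=
          mul_le_mul_of_nonneg_right (kpow_le_one hP n x x) (pow_nonneg z.coe_nonneg n)
        _ = (z:ℝ)^n := one_mul _
    · exact_mod_cast hz1
  calc c = (c.toNNReal : ℝ≥0∞) := (ENNReal.coe_toNNReal hc1).symm
    _ < (z : ℝ≥0∞) := by exact_mod_cast hcz2
    _ ≤ rad P x := le_rad hsum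

lemma exists_pos_return (hP : IsTransProb P) (hirr : Irred P) {x y : S} (hxy : y ≠ x) :
    ∃ N, 1 ≤ N ∧ 0 < kpow P N x x := by
  obtain ⟨n, hn⟩ := hirr x y
  obtain ⟨m, hm⟩ := hirr y x
  have hn0 : n ≠ 0 := by
    rintro rfl
    rw [(by simp [kpow, Ne.symm hxy] : kpow P 0 x y = 0)] at hn
    exact lt_irrefl 0 hn
  refine ⟨n + m, by omega, ?_⟩
  exact lt_of_lt_of_le (mul_pos hn hm) (kpow_supermul hP n m x y x)

lemma kpow_pow_le (hP : IsTransProb P) {x : S} {N : ℕ} (k : ℕ) :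
    (kpow P N x x)^k ≤ kpow P (N * k) x x := by
  induction k with
  | zero => simp [kpow]
  | succ k ih =>
    have : N * (k + 1) = N * k + N := by ring
    rw [this, pow_succ]
    calc (kpow P N x x)^k * kpow P N x x ≤ kpow P (N*k) x x * kpow P N x x :=
        mul_le_mul_of_nonneg_right ih (kpow_nonneg hP N x x)
      _ ≤ kpow P (N*k + N) x x := kpow_supermul hP _ _ x x x

lemma rad_ne_top (hP : IsTransProb P) (hirr : Irred P) {x y : S} (hxy : y ≠ x) :
    rad P x ≠ ∞ := by
  obtain ⟨N, hN1, ha⟩ := exists_pos_return hP hirr hxy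
  set a := kpow P N x x with hadef
  have ha1 : a ≤ 1 := kpow_le_one hP N x x
  refine ne_top_of_le_ne_top (b := ENNReal.ofReal a⁻¹) ENNReal.ofReal_ne_top
    (rad_le fun z hz => ?_)
  -- claim : (z:ℝ) ≤ a⁻¹
  have hz2 : (z:ℝ) ≤ a⁻¹ := by
    by_contra hcon
    push_neg at hcon
    have hz1 : (1:ℝ) ≤ z := le_trans ((one_le_inv₀ ha).mpr ha1) hcon.le
    have hone : (1:ℝ) < a * (z:ℝ)^N := by
      calc (1:ℝ) = a * a⁻¹ := (mul_inv_cancel₀ ha.ne').symm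
        _ < a * z := by exact mul_lt_mul_of_pos_left hcon ha
        _ ≤ a * (z:ℝ)^N := by
            refine mul_le_mul_of_nonneg_left ?_ ha.le
            calc (z:ℝ) = (z:ℝ)^1 := (pow_one _).symm
              _ ≤ (z:ℝ)^N := pow_le_pow_right₀ hz1 hN1
    have hinj : Function.Injective (fun k => N * k) := fun a b hab =>
      Nat.eq_of_mul_eq_mul_left (by omega) hab
    have hsub := hz.comp_injective hinj
    have hlb : ∀ k, (1:ℝ) ≤ kpow P (N*k) x x * (z:ℝ)^(N*k) := by
      intro k
      calc (1:ℝ) = 1^k := (one_pow k).symm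
        _ ≤ (a * (z:ℝ)^N)^k := pow_le_pow_left₀ (by norm_num) hone.le k
        _ = a^k * (z:ℝ)^(N*k) := by rw [mul_pow, ← pow_mul]
        _ ≤ kpow P (N*k) x x * (z:ℝ)^(N*k) :=
            mul_le_mul_of_nonneg_right (kpow_pow_le hP k)
              (pow_nonneg z.coe_nonneg _)
    have htend := hsub.tendsto_atTop_zero
    have hev := htend.eventually_lt_const (by norm_num : (0:ℝ) < 1)
    obtain ⟨k, hk⟩ := hev.exists
    exact absurd (hlb k) (not_le.mpr hk)
  calc (z : ℝ≥0∞) = ENNReal.ofReal (z:ℝ) := ENNReal.ofReal_coe_nnreal.symm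
    _ ≤ ENNReal.ofReal a⁻¹ := ENNReal.ofReal_le_ofReal hz2

set_option maxHeartbeats 1000000 in
lemma rad_le_rad (hP : IsTransProb P) (hirr : Irred P) (x y : S) :
    rad P x ≤ rad P y := by
  refine rad_le fun z hz => ?_
  rcases eq_or_lt_of_le (show (0:ℝ≥0) ≤ z by positivity) with hz0 | hz0
  · rw [← hz0]; simp
  obtain ⟨m, hm⟩ := hirr x y
  obtain ⟨k, hk⟩ := hirr y x
  set c : ℝ := kpow P m x y * kpow P k y x with hc
  have hcpos : 0 < c := mul_pos hm hk
  set d : ℝ := c * (z:ℝ)^(m+k) with hd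
  have hdpos : 0 < d := mul_pos hcpos (pow_pos (by exact_mod_cast hz0) _)
  have hshift : Summable (fun n => kpow P (n + (m+k)) x x * (z:ℝ)^(n + (m+k))) :=
    (summable_nat_add_iff (m+k)).mpr hz
  have hcomp : ∀ n, kpow P n y y * (z:ℝ)^n
      ≤ d⁻¹ * (kpow P (n + (m+k)) x x * (z:ℝ)^(n + (m+k))) := by
    intro n
    have hchain : c * kpow P n y y ≤ kpow P (n + (m+k)) x x := by
      have h1 : kpow P n y y * kpow P k y x ≤ kpow P (n+k) y x :=
        kpow_supermul hP n k y y x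
      have h2 : kpow P m x y * kpow P (n+k) y x ≤ kpow P (m+(n+k)) x x :=
        kpow_supermul hP m (n+k) x y x
      have h3 : kpow P m x y * (kpow P n y y * kpow P k y x) ≤ kpow P (m+(n+k)) x x :=
        le_trans (mul_le_mul_of_nonneg_left h1 (kpow_nonneg hP m x y)) h2
      have heq : m + (n + k) = n + (m + k) := by omega
      rw [heq] at h3
      calc c * kpow P n y y = kpow P m x y * (kpow P n y y * kpow P k y x) := by
            rw [hc]; ring
        _ ≤ kpow P (n + (m+k)) x x := h3
    have hmain : d * (kpow P n y y * (z:ℝ)^n)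
        ≤ kpow P (n + (m+k)) x x * (z:ℝ)^(n + (m+k)) := by
      calc d * (kpow P n y y * (z:ℝ)^n)
          = (c * kpow P n y y) * (z:ℝ)^(n + (m+k)) := by
            rw [hd, pow_add]; ring
        _ ≤ kpow P (n + (m+k)) x x * (z:ℝ)^(n + (m+k)) :=
            mul_le_mul_of_nonneg_right hchain (pow_nonneg z.coe_nonneg _)
    calc kpow P n y y * (z:ℝ)^n
        = d⁻¹ * (d * (kpow P n y y * (z:ℝ)^n)) := by
          rw [← mul_assoc, inv_mul_cancel₀ hdpos.ne', one_mul]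
      _ ≤ d⁻¹ * (kpow P (n + (m+k)) x x * (z:ℝ)^(n + (m+k))) :=
          mul_le_mul_of_nonneg_left hmain (inv_nonneg.mpr hdpos.le)
  have hsumy : Summable fun n => kpow P n y y * (z:ℝ)^n := by
    refine Summable.of_nonneg_of_le
      (fun n => mul_nonneg (kpow_nonneg hP n y y) (pow_nonneg z.coe_nonneg n))
      hcomp (hshift.mul_left _)
  exact le_rad hsumy

lemma rad_eq_rad (hP : IsTransProb P) (hirr : Irred P) (x y : S) :
    rad P x = rad P y :=
  le_antisymm (rad_le_rad hP hirr x y) (rad_le_rad hP hirr y x)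

end radius

section final
variable {P : S → S → ℝ}

lemma Ufun_eq_UE (hP : IsTransProb P) (x : S) {z : ℝ} (hz : 0 ≤ z) :
    Ufun P x x z = UE P x (ENNReal.ofReal z) := by
  refine tsum_congr fun n => ?_
  rw [ENNReal.ofReal_mul (fret_nonneg hP n x x), ENNReal.ofReal_pow hz, fE_eq hP]

lemma GrE_eq_green (hP : IsTransProb P) (x : S) {z : ℝ} (hz : 0 ≤ z) :
    GrE P x (ENNReal.ofReal z) = green P x x z := by
  refine (tsum_congr fun n => ?_).symm
  rw [ENNReal.ofReal_mul (kpow_nonneg hP n x x), ENNReal.ofReal_pow hz, qpow_eq hP]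

lemma summable_of_GrE_ne_top (hP : IsTransProb P) (x : S) {z : ℝ} (hz : 0 ≤ z)
    (h : GrE P x (ENNReal.ofReal z) ≠ ∞) :
    Summable (fun n => kpow P n x x * z^n) := by
  rw [GrE_eq_green hP x hz, green] at h
  have := ENNReal.summable_toReal h
  refine this.congr fun n => ?_
  rw [ENNReal.toReal_ofReal (mul_nonneg (kpow_nonneg hP n x x) (pow_nonneg hz n))]

lemma GrE_ne_top_of_summable (hP : IsTransProb P) (x : S) {z : ℝ} (hz : 0 ≤ z)
    (h : Summable (fun n => kpow P n x x * z^n)) :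
    GrE P x (ENNReal.ofReal z) ≠ ∞ := by
  rw [GrE_eq_green hP x hz, green,
    ← ENNReal.ofReal_tsum_of_nonneg (fun n =>
      mul_nonneg (kpow_nonneg hP n x x) (pow_nonneg hz n)) h]
  exact ENNReal.ofReal_ne_top

lemma GrE_ne_top_of_lt_rad (hP : IsTransProb P) (x : S) {z : ℝ} (hz : 0 ≤ z)
    (h : ENNReal.ofReal z < rad P x) :
    GrE P x (ENNReal.ofReal z) ≠ ∞ := by
  rw [rad, convRadius, lt_iSup_iff] at h
  obtain ⟨z', hz'⟩ := h
  rw [lt_iSup_iff] at hz'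
  obtain ⟨hsum, hlt⟩ := hz'
  have hzz' : z ≤ (z' : ℝ) := by
    have := (ENNReal.ofReal_lt_iff_lt_toReal hz ENNReal.coe_ne_top).mp hlt
    simpa using this.le
  refine GrE_ne_top_of_summable hP x hz ?_
  refine Summable.of_nonneg_of_le
    (fun n => mul_nonneg (kpow_nonneg hP n x x) (pow_nonneg hz n)) (fun n => ?_) hsum
  exact mul_le_mul_of_nonneg_left (pow_le_pow_left₀ hz hzz' n) (kpow_nonneg hP n x x)

lemma UE_lt_one_of_lt_rad (hP : IsTransProb P) (x : S) {z : ℝ} (hz : 0 ≤ z)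
    (h : ENNReal.ofReal z < rad P x) :
    UE P x (ENNReal.ofReal z) < 1 :=
  UE_lt_one_of_GrE_ne_top (GrE_ne_top_of_lt_rad hP x hz h)

lemma specRadius_inv (hP : IsTransProb P) (hirr : Irred P) [Nonempty S] (x : S)
    (hne : rad P x ≠ ∞) :
    (specRadius P)⁻¹ = (rad P x).toReal := by
  have hE : specRadiusE P = (rad P x)⁻¹ := by
    rw [specRadiusE]
    rw [iSup_congr (fun x' => by
      rw [show (convRadius fun n => kpow P n x' x') = rad P x from rad_eq_rad hP hirr x' x])]
    exact iSup_const
  rw [specRadius, hE, ENNReal.toReal_inv, inv_inv]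

end final

theorem Ufun_gt_one_iff {S : Type*} [Countable S] [Infinite S] (P : S → S → ℝ)
    (hP : IsTransProb P) (hirr : Irred P)
    (x : S) (z : ℝ) (hz : 0 < z) :
    1 < Ufun P x x z ↔ (specRadius P)⁻¹ < z := by
  obtain ⟨y, hy⟩ := exists_ne x
  have hne : rad P x ≠ ∞ := rad_ne_top hP hirr hy
  have hrr : (specRadius P)⁻¹ = (rad P x).toReal := specRadius_inv hP hirr x hne
  set rr := (rad P x).toReal with hrrdef
  have hr1 : 1 ≤ rr := by
    rw [hrrdef, ← ENNReal.toReal_one]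
    exact ENNReal.toReal_mono hne (one_le_rad hP x)
  rw [hrr, Ufun_eq_UE hP x hz.le]
  constructor
  · -- 1 < UE → rr < z
    intro hU
    by_contra hcon
    push_neg at hcon  -- z ≤ rr
    -- get a finite partial sum > 1
    rw [UE, ENNReal.tsum_eq_iSup_sum, lt_iSup_iff] at hU
    obtain ⟨F, hF⟩ := hU
    set ψ : ℝ → ℝ := fun t => ∑ n ∈ F, fret P n x x * t^n with hψ
    have hψz : 1 < ψ z := by
      by_contra hψz
      push_neg at hψz
      have : (∑ n ∈ F, fE P n x x * (ENNReal.ofReal z)^n) ≤ 1 := by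
        calc (∑ n ∈ F, fE P n x x * (ENNReal.ofReal z)^n)
            = ENNReal.ofReal (ψ z) := by
              rw [hψ, ENNReal.ofReal_sum_of_nonneg (fun n _ =>
                mul_nonneg (fret_nonneg hP n x x) (pow_nonneg hz.le n))]
              exact Finset.sum_congr rfl fun n _ => by
                rw [ENNReal.ofReal_mul (fret_nonneg hP n x x), ENNReal.ofReal_pow hz.le,
                  fE_eq hP]
          _ ≤ 1 := ENNReal.ofReal_le_one.mpr hψz
      exact absurd (hF.trans_le this) (lt_irrefl _)
    have hψt : ∀ t : ℝ, 0 < t → t < z → ψ t ≤ 1 := by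
      intro t ht htz
      have htr : ENNReal.ofReal t < rad P x := by
        rw [ENNReal.ofReal_lt_iff_lt_toReal ht.le hne]
        exact htz.trans_le hcon
      have hUt := UE_lt_one_of_lt_rad hP x ht.le htr
      have hle : ENNReal.ofReal (ψ t) ≤ UE P x (ENNReal.ofReal t) := by
        rw [hψ, ENNReal.ofReal_sum_of_nonneg (fun n _ =>
          mul_nonneg (fret_nonneg hP n x x) (pow_nonneg ht.le n))]
        calc (∑ n ∈ F, ENNReal.ofReal (fret P n x x * t^n))
            = ∑ n ∈ F, fE P n x x * (ENNReal.ofReal t)^n :=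
              Finset.sum_congr rfl fun n _ => by
                rw [ENNReal.ofReal_mul (fret_nonneg hP n x x), ENNReal.ofReal_pow ht.le,
                  fE_eq hP]
          _ ≤ UE P x (ENNReal.ofReal t) := ENNReal.sum_le_tsum F
      have : ENNReal.ofReal (ψ t) < 1 := hle.trans_lt hUt
      exact (ENNReal.ofReal_lt_one.mp this).le
    -- continuity: ψ z ≤ 1, contradiction
    have hcont : ContinuousAt ψ z := by
      rw [hψ]
      exact (continuous_finset_sum F fun n _ =>
        (continuous_const.mul (continuous_pow n))).continuousAt
    have htends : Filter.Tendsto ψ (nhdsWithin z (Set.Iio z)) (nhds (ψ z)) :=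
      (hcont.continuousWithinAt).tendsto
    have hev : ∀ᶠ t in nhdsWithin z (Set.Iio z), ψ t ≤ 1 := by
      have h1 : ∀ᶠ t in nhdsWithin z (Set.Iio z), 0 < t :=
        eventually_nhdsWithin_of_eventually_nhds (eventually_gt_nhds hz)
      have h2 : ∀ᶠ t in nhdsWithin z (Set.Iio z), t < z :=
        eventually_mem_nhdsWithin.mono fun t ht => ht
      filter_upwards [h1, h2] with t ht1 ht2
      exact hψt t ht1 ht2
    have : ψ z ≤ 1 := le_of_tendsto htends hev
    exact absurd (hψz.trans_le this) (lt_irrefl _)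
  · -- rr < z → 1 < UE
    intro hrz
    by_contra hU
    push_neg at hU  -- UE ≤ 1
    set z' : ℝ := (rr + z) / 2 with hz'
    have hz'1 : rr < z' := by rw [hz']; linarith
    have hz'2 : z' < z := by rw [hz']; linarith
    have hz'pos : 0 < z' := by
      have : (0:ℝ) < rr := lt_of_lt_of_le one_pos hr1
      linarith
    have hscale : UE P x (ENNReal.ofReal z') ≤ ENNReal.ofReal (z'/z) := by
      have step : ∀ n, fE P n x x * (ENNReal.ofReal z')^n
          ≤ ENNReal.ofReal (z'/z) * (fE P n x x * (ENNReal.ofReal z)^n) := by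
        intro n
        cases n with
        | zero => simp [fE_zero]
        | succ n =>
          rw [show ENNReal.ofReal (z'/z) * (fE P (n+1) x x * (ENNReal.ofReal z)^(n+1))
              = fE P (n+1) x x * (ENNReal.ofReal (z'/z) * (ENNReal.ofReal z)^(n+1)) by ring]
          refine mul_le_mul_right ?_ _
          rw [← ENNReal.ofReal_pow hz'pos.le, ← ENNReal.ofReal_pow hz.le,
            ← ENNReal.ofReal_mul (by positivity)]
          refine ENNReal.ofReal_le_ofReal ?_
          have : z'/z * z^(n+1) = z' * z^n := by
            field_simp
            ring
          rw [this, pow_succ']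
          exact mul_le_mul_of_nonneg_left (pow_le_pow_left₀ hz'pos.le hz'2.le n) hz'pos.le
      calc UE P x (ENNReal.ofReal z')
          ≤ ∑' n, ENNReal.ofReal (z'/z) * (fE P n x x * (ENNReal.ofReal z)^n) :=
            ENNReal.tsum_le_tsum step
        _ = ENNReal.ofReal (z'/z) * UE P x (ENNReal.ofReal z) := ENNReal.tsum_mul_left
        _ ≤ ENNReal.ofReal (z'/z) * 1 := mul_le_mul_right hU _
        _ = ENNReal.ofReal (z'/z) := mul_one _
    have hUz' : UE P x (ENNReal.ofReal z') < 1 := by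
      refine hscale.trans_lt (ENNReal.ofReal_lt_one.mpr ?_)
      rw [div_lt_one hz]
      exact hz'2
    have hGfin : GrE P x (ENNReal.ofReal z') < ∞ :=
      GrE_lt_top_of_UE_lt_one hP ENNReal.ofReal_ne_top hUz'
    have hsum := summable_of_GrE_ne_top hP x hz'pos.le hGfin.ne
    have hle : ENNReal.ofReal z' ≤ rad P x := by
      have : Summable (fun n => kpow P n x x * ((z'.toNNReal : ℝ))^n) := by
        refine hsum.congr fun n => ?_
        rw [Real.coe_toNNReal z' hz'pos.le]
      have h2 := le_rad this
      rwa [← ENNReal.ofReal_coe_nnreal, Real.coe_toNNReal z' hz'pos.le] at h2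
    have : z' ≤ rr := by
      rw [hrrdef]
      exact ENNReal.toReal_mono hne hle |>.trans_eq' (ENNReal.toReal_ofReal hz'pos.le)
    exact absurd (hz'1.trans_le this) (lt_irrefl _)
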